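/- arXiv:0704.0508 — 3 statements merged into one kernel-verified Lean document; each statement's English description precedes it below -/
import Mathlib

section
/- Let (Ω, F, P) be a probability space with a filtration F_1 ⊆ F_2 ⊆ … ⊆ F_M, and let Δ_1, …, Δ_M be nonnegative random variables with Δ_i measurable with respect to F_i. Suppose there are constants δ ≥ 0 and F ≥ 0 such that Δ_i ≤ δ almost surely for all i, and E[Σ_{j=i+1}^{M} Δ_j | F_i] ≤ F almost surely for every i. Then E[(Σ_{i=1}^M Δ_i)^2] ≤ (δ + 2F) · E[Σ_{i=1}^M Δ_i] ≤ (δ + 2F) · (δ + F). -/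
open MeasureTheory Finset

private lemma sq_sum_Icc_aux (M : ℕ) (a : ℕ → ℝ) :
    (∑ i ∈ Finset.Icc 1 M, a i) ^ 2 = ∑ i ∈ Finset.Icc 1 M, (a i) ^ 2
      + 2 * ∑ i ∈ Finset.Icc 1 M, a i * ∑ j ∈ Finset.Icc (i + 1) M, a j := by
  induction M with
  | zero => simp
  | succ M ih =>
    have h1 : ∀ i ∈ Finset.Icc 1 M, a i * ∑ j ∈ Finset.Icc (i + 1) (M + 1), a j
        = a i * ∑ j ∈ Finset.Icc (i + 1) M, a j + a i * a (M + 1) := by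
      intro i hi
      simp only [Finset.mem_Icc] at hi
      rw [Finset.sum_Icc_succ_top (by omega), mul_add]
    rw [Finset.sum_Icc_succ_top (by omega : 1 ≤ M + 1),
        Finset.sum_Icc_succ_top (by omega : 1 ≤ M + 1),
        Finset.sum_Icc_succ_top (by omega : 1 ≤ M + 1),
        Finset.sum_congr rfl h1, Finset.sum_add_distrib, ← Finset.sum_mul]
    rw [show Finset.Icc (M + 1 + 1) (M + 1) = ∅ from Finset.Icc_eq_empty (by omega)]
    simp only [Finset.sum_empty, mul_zero, add_zero]
    linear_combination ih

theorem stmt_0 {Ω : Type*} {m0 : MeasurableSpace Ω} (P : Measure Ω) [IsProbabilityMeasure P]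
    (M : ℕ) (F : ℕ → MeasurableSpace Ω) (hF_le : ∀ i, F i ≤ m0)
    (hF_mono : ∀ i j, i ≤ j → F i ≤ F j)
    (Δ : ℕ → Ω → ℝ) (hΔ_nonneg : ∀ i ω, 0 ≤ Δ i ω)
    (hΔ_meas : ∀ i, StronglyMeasurable[F i] (Δ i))
    (δ C : ℝ) (hδ : 0 ≤ δ) (hC : 0 ≤ C)
    (hΔ_bd : ∀ i, ∀ᵐ ω ∂P, Δ i ω ≤ δ)
    (hcond : ∀ i ∈ Finset.Icc 1 M,
      ∀ᵐ ω ∂P, (P[fun ω' => ∑ j ∈ Finset.Icc (i + 1) M, Δ j ω' | F i]) ω ≤ C) :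
    (∫ ω, (∑ i ∈ Finset.Icc 1 M, Δ i ω) ^ 2 ∂P
        ≤ (δ + 2 * C) * ∫ ω, ∑ i ∈ Finset.Icc 1 M, Δ i ω ∂P) ∧
    (δ + 2 * C) * (∫ ω, ∑ i ∈ Finset.Icc 1 M, Δ i ω ∂P) ≤ (δ + 2 * C) * (δ + C) := by
  have hmeas : ∀ i, AEStronglyMeasurable (Δ i) P :=
    fun i => ((hΔ_meas i).mono (hF_le i)).aestronglyMeasurable
  have habs : ∀ i, ∀ᵐ ω ∂P, ‖Δ i ω‖ ≤ δ := fun i => (hΔ_bd i).mono fun ω h => by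
    rw [Real.norm_eq_abs, abs_of_nonneg (hΔ_nonneg i ω)]; exact h
  have hInt : ∀ i, Integrable (Δ i) P :=
    fun i => Integrable.mono' (integrable_const δ) (hmeas i) (habs i)
  have hIntS : ∀ t : Finset ℕ, Integrable (fun ω => ∑ j ∈ t, Δ j ω) P :=
    fun t => integrable_finset_sum t fun i _ => hInt i
  have hIntg : ∀ i, Integrable (fun ω => Δ i ω * ∑ j ∈ Finset.Icc (i + 1) M, Δ j ω) P :=
    fun i => (hIntS _).bdd_mul (hmeas i) (habs i)
  have hIntsq : ∀ i, Integrable (fun ω => Δ i ω ^ 2) P := by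
    intro i
    have := (hInt i).bdd_mul (hmeas i) (habs i)
    simpa [pow_two] using this
  -- key bound on the cross terms
  have key : ∀ i ∈ Finset.Icc 1 M,
      ∫ ω, Δ i ω * ∑ j ∈ Finset.Icc (i + 1) M, Δ j ω ∂P ≤ C * ∫ ω, Δ i ω ∂P := by
    intro i hi
    set g : Ω → ℝ := fun ω => ∑ j ∈ Finset.Icc (i + 1) M, Δ j ω with hg
    have hpull : P[Δ i * g | F i] =ᵐ[P] Δ i * P[g | F i] :=
      condExp_mul_of_stronglyMeasurable_left (hΔ_meas i) (hIntg i) (hIntS _)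
    have hL : Integrable (Δ i * P[g | F i]) P := integrable_condExp.congr hpull
    have hR : Integrable (fun ω => Δ i ω * C) P := (hInt i).mul_const C
    have h2 : ∀ᵐ ω ∂P, (Δ i * P[g | F i]) ω ≤ Δ i ω * C :=
      (hcond i hi).mono fun ω h => mul_le_mul_of_nonneg_left h (hΔ_nonneg i ω)
    calc ∫ ω, Δ i ω * g ω ∂P = ∫ ω, (P[Δ i * g | F i]) ω ∂P := by
            rw [integral_condExp (hF_le i)]; rfl
      _ = ∫ ω, (Δ i * P[g | F i]) ω ∂P := integral_congr_ae hpull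
      _ ≤ ∫ ω, Δ i ω * C ∂P := integral_mono_ae hL hR h2
      _ = C * ∫ ω, Δ i ω ∂P := by rw [integral_mul_const, mul_comm]
  have keysq : ∀ i, ∫ ω, Δ i ω ^ 2 ∂P ≤ δ * ∫ ω, Δ i ω ∂P := by
    intro i
    have h2 : ∀ᵐ ω ∂P, Δ i ω ^ 2 ≤ δ * Δ i ω := (hΔ_bd i).mono fun ω h => by
      rw [pow_two]; exact mul_le_mul_of_nonneg_right h (hΔ_nonneg i ω)
    calc ∫ ω, Δ i ω ^ 2 ∂P ≤ ∫ ω, δ * Δ i ω ∂P :=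
          integral_mono_ae (hIntsq i) ((hInt i).const_mul δ) h2
      _ = δ * ∫ ω, Δ i ω ∂P := integral_const_mul δ _
  have hSsum : ∫ ω, ∑ i ∈ Finset.Icc 1 M, Δ i ω ∂P
      = ∑ i ∈ Finset.Icc 1 M, ∫ ω, Δ i ω ∂P := integral_finset_sum _ fun i _ => hInt i
  constructor
  · have hrw : ∫ ω, (∑ i ∈ Finset.Icc 1 M, Δ i ω) ^ 2 ∂P
        = ∑ i ∈ Finset.Icc 1 M, ∫ ω, Δ i ω ^ 2 ∂P
          + 2 * ∑ i ∈ Finset.Icc 1 M, ∫ ω, Δ i ω * ∑ j ∈ Finset.Icc (i + 1) M, Δ j ω ∂P := by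
      calc ∫ ω, (∑ i ∈ Finset.Icc 1 M, Δ i ω) ^ 2 ∂P
          = ∫ ω, (∑ i ∈ Finset.Icc 1 M, Δ i ω ^ 2
              + 2 * ∑ i ∈ Finset.Icc 1 M, Δ i ω * ∑ j ∈ Finset.Icc (i + 1) M, Δ j ω) ∂P := by
            congr 1; funext ω; exact sq_sum_Icc_aux M fun i => Δ i ω
        _ = _ := by
            rw [integral_add (integrable_finset_sum _ fun i _ => hIntsq i)
              ((integrable_finset_sum _ fun i _ => hIntg i).const_mul 2),
              integral_finset_sum _ fun i _ => hIntsq i, integral_const_mul,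
              integral_finset_sum _ fun i _ => hIntg i]
    rw [hrw, hSsum]
    have h1 : ∑ i ∈ Finset.Icc 1 M, ∫ ω, Δ i ω ^ 2 ∂P
        ≤ ∑ i ∈ Finset.Icc 1 M, δ * ∫ ω, Δ i ω ∂P := Finset.sum_le_sum fun i _ => keysq i
    have h2 : ∑ i ∈ Finset.Icc 1 M, ∫ ω, Δ i ω * ∑ j ∈ Finset.Icc (i + 1) M, Δ j ω ∂P
        ≤ ∑ i ∈ Finset.Icc 1 M, C * ∫ ω, Δ i ω ∂P := Finset.sum_le_sum key
    calc ∑ i ∈ Finset.Icc 1 M, ∫ ω, Δ i ω ^ 2 ∂P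
          + 2 * ∑ i ∈ Finset.Icc 1 M, ∫ ω, Δ i ω * ∑ j ∈ Finset.Icc (i + 1) M, Δ j ω ∂P
        ≤ ∑ i ∈ Finset.Icc 1 M, δ * ∫ ω, Δ i ω ∂P
          + 2 * ∑ i ∈ Finset.Icc 1 M, C * ∫ ω, Δ i ω ∂P := by linarith
      _ = ∑ i ∈ Finset.Icc 1 M, (δ + 2 * C) * ∫ ω, Δ i ω ∂P := by
          rw [Finset.mul_sum, ← Finset.sum_add_distrib]
          exact Finset.sum_congr rfl fun i _ => by ring
      _ = (δ + 2 * C) * ∑ i ∈ Finset.Icc 1 M, ∫ ω, Δ i ω ∂P := (Finset.mul_sum _ _ _).symm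
  · rcases Nat.eq_zero_or_pos M with hM | hM
    · subst hM
      simp only [show Finset.Icc 1 0 = (∅ : Finset ℕ) from Finset.Icc_eq_empty (by omega),
        Finset.sum_empty, integral_zero, mul_zero]
      positivity
    · have hsplit : Finset.Icc 1 M = insert 1 (Finset.Icc 2 M) := by
        ext x; simp only [Finset.mem_Icc, Finset.mem_insert]; omega
      have hnot : (1 : ℕ) ∉ Finset.Icc 2 M := by simp
      have hS : ∫ ω, ∑ i ∈ Finset.Icc 1 M, Δ i ω ∂P
          = ∫ ω, Δ 1 ω ∂P + ∫ ω, ∑ j ∈ Finset.Icc 2 M, Δ j ω ∂P := by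
        simp only [hsplit, Finset.sum_insert hnot]
        exact integral_add (hInt 1) (hIntS _)
      have hb1 : ∫ ω, Δ 1 ω ∂P ≤ δ := by
        calc ∫ ω, Δ 1 ω ∂P ≤ ∫ _ω, δ ∂P :=
              integral_mono_ae (hInt 1) (integrable_const δ) (hΔ_bd 1)
          _ = δ := by simp
      have hb2 : ∫ ω, ∑ j ∈ Finset.Icc 2 M, Δ j ω ∂P ≤ C := by
        have h1M : (1 : ℕ) ∈ Finset.Icc 1 M := by simp only [Finset.mem_Icc]; omega
        calc ∫ ω, ∑ j ∈ Finset.Icc 2 M, Δ j ω ∂P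
            = ∫ ω, (P[fun ω' => ∑ j ∈ Finset.Icc (1 + 1) M, Δ j ω' | F 1]) ω ∂P := by
              rw [integral_condExp (hF_le 1)]
          _ ≤ ∫ _ω, C ∂P :=
              integral_mono_ae integrable_condExp (integrable_const C) (hcond 1 h1M)
          _ = C := by simp
      have : ∫ ω, ∑ i ∈ Finset.Icc 1 M, Δ i ω ∂P ≤ δ + C := by
        rw [hS]; linarith
      exact mul_le_mul_of_nonneg_left this (by linarith)
end

section
/- Let Δ_1, …, Δ_M be nonnegative random variables adapted to a filtration F_1 ⊆ … ⊆ F_M with E[Σ_{j=i}^{M} Δ_j | F_{i}] ≤ F almost surely for all i (where F ≥ 0 is a constant). Then E[(Σ_{i=1}^M Δ_i)^2] ≤ 2F^2. -/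
open MeasureTheory Finset

theorem stmt_1 {Ω : Type*} {m0 : MeasurableSpace Ω} (P : Measure Ω) [IsProbabilityMeasure P]
    (M : ℕ) (F : ℕ → MeasurableSpace Ω) (hF_le : ∀ i, F i ≤ m0)
    (hF_mono : ∀ i j, i ≤ j → F i ≤ F j)
    (Δ : ℕ → Ω → ℝ) (hΔ_nonneg : ∀ i ω, 0 ≤ Δ i ω)
    (hΔ_meas : ∀ i, StronglyMeasurable[F i] (Δ i))
    (C : ℝ) (hC : 0 ≤ C)
    (hcond : ∀ i ∈ Finset.Icc 1 M,
      ∀ᵐ ω ∂P, (P[fun ω' => ∑ j ∈ Finset.Icc i M, Δ j ω' | F i]) ω ≤ C) :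
    ∫ ω, (∑ i ∈ Finset.Icc 1 M, Δ i ω) ^ 2 ∂P ≤ 2 * C ^ 2 := by
  rcases Nat.eq_zero_or_pos M with hM | hM
  · simp [hM]; positivity
  set S : Ω → ℝ := fun ω => ∑ i ∈ Finset.Icc 1 M, Δ i ω with hS
  by_cases hSint : Integrable (fun ω => S ω ^ 2) P
  swap
  · rw [integral_undef hSint]; positivity
  have hSnn : ∀ ω, 0 ≤ S ω := fun ω => Finset.sum_nonneg fun i _ => hΔ_nonneg i ω
  have hSmeas : StronglyMeasurable S :=
    Finset.stronglyMeasurable_fun_sum _ fun i _ => (hΔ_meas i).mono (hF_le i)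
  have hSInt : Integrable S P := by
    refine Integrable.mono' ((integrable_const (1:ℝ)).add hSint) hSmeas.aestronglyMeasurable ?_
    filter_upwards with ω
    simp only [Pi.add_apply]
    rw [Real.norm_of_nonneg (hSnn ω)]
    nlinarith [hSnn ω, sq_nonneg (S ω - 1)]
  set R : ℕ → Ω → ℝ := fun i ω => ∑ j ∈ Finset.Icc i M, Δ j ω with hR
  have hRle : ∀ i, 1 ≤ i → ∀ ω, R i ω ≤ S ω := by
    intro i hi ω
    exact Finset.sum_le_sum_of_subset_of_nonneg
      (Finset.Icc_subset_Icc_left hi) (fun j _ _ => hΔ_nonneg j ω)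
  have hRnn : ∀ i ω, 0 ≤ R i ω := fun i ω => Finset.sum_nonneg fun j _ => hΔ_nonneg j ω
  have hRmeas : ∀ i, StronglyMeasurable (R i) := fun i =>
    Finset.stronglyMeasurable_fun_sum _ fun j _ => (hΔ_meas j).mono (hF_le j)
  have hRInt : ∀ i, 1 ≤ i → Integrable (R i) P := by
    intro i hi
    refine Integrable.mono' hSInt (hRmeas i).aestronglyMeasurable ?_
    filter_upwards with ω
    rw [Real.norm_of_nonneg (hRnn i ω)]; exact hRle i hi ω
  have hΔleS : ∀ i ∈ Finset.Icc 1 M, ∀ ω, Δ i ω ≤ S ω := fun i hi ω =>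
    Finset.single_le_sum (fun j _ => hΔ_nonneg j ω) hi
  have hΔInt : ∀ i ∈ Finset.Icc 1 M, Integrable (Δ i) P := by
    intro i hi
    refine Integrable.mono' hSInt ((hΔ_meas i).mono (hF_le i)).aestronglyMeasurable ?_
    filter_upwards with ω
    rw [Real.norm_of_nonneg (hΔ_nonneg i ω)]
    exact hΔleS i hi ω
  have hΔRInt : ∀ i ∈ Finset.Icc 1 M, Integrable (Δ i * R i) P := by
    intro i hi
    have h1 : 1 ≤ i := (Finset.mem_Icc.mp hi).1
    refine Integrable.mono' hSint
      (((hΔ_meas i).mono (hF_le i)).mul (hRmeas i)).aestronglyMeasurable ?_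
    filter_upwards with ω
    rw [Pi.mul_apply, Real.norm_of_nonneg (mul_nonneg (hΔ_nonneg i ω) (hRnn i ω)), sq]
    exact mul_le_mul (hΔleS i hi ω) (hRle i h1 ω) (hRnn i ω) (hSnn ω)
  -- key bound
  have key : ∀ i ∈ Finset.Icc 1 M, ∫ ω, Δ i ω * R i ω ∂P ≤ C * ∫ ω, Δ i ω ∂P := by
    intro i hi
    have h1 : 1 ≤ i := (Finset.mem_Icc.mp hi).1
    have hmul := condExp_mul_of_stronglyMeasurable_left (μ := P) (m := F i) (hΔ_meas i)
      (hΔRInt i hi) (hRInt i h1)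
    have hcint : Integrable (fun ω => Δ i ω * (P[R i|F i]) ω) P :=
      (integrable_condExp (f := Δ i * R i) (m := F i)).congr hmul
    calc ∫ ω, Δ i ω * R i ω ∂P
        = ∫ ω, (P[Δ i * R i|F i]) ω ∂P := (integral_condExp (hF_le i)).symm
      _ = ∫ ω, Δ i ω * (P[R i|F i]) ω ∂P := integral_congr_ae hmul
      _ ≤ ∫ ω, C * Δ i ω ∂P := by
          refine integral_mono_ae hcint ((hΔInt i hi).const_mul C) ?_
          filter_upwards [hcond i hi] with ω hω
          calc Δ i ω * (P[R i|F i]) ω ≤ Δ i ω * C :=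
                mul_le_mul_of_nonneg_left hω (hΔ_nonneg i ω)
            _ = C * Δ i ω := mul_comm _ _
      _ = C * ∫ ω, Δ i ω ∂P := integral_const_mul _ _
  -- pointwise quadratic bound
  have pt : ∀ ω, S ω ^ 2 ≤ 2 * ∑ i ∈ Finset.Icc 1 M, Δ i ω * R i ω := by
    intro ω
    set T := (Finset.Icc 1 M) ×ˢ (Finset.Icc 1 M) with hT
    have hsq : S ω ^ 2 = ∑ p ∈ T, Δ p.1 ω * Δ p.2 ω := by
      rw [sq, hS, Finset.sum_mul_sum, hT, Finset.sum_product]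
    have hrhs : ∑ i ∈ Finset.Icc 1 M, Δ i ω * R i ω
        = ∑ p ∈ T.filter (fun p => p.1 ≤ p.2), Δ p.1 ω * Δ p.2 ω := by
      rw [hT, Finset.sum_filter, Finset.sum_product]
      refine Finset.sum_congr rfl fun i hi => ?_
      have h1 : 1 ≤ i := (Finset.mem_Icc.mp hi).1
      have hfil : (Finset.Icc 1 M).filter (fun j => i ≤ j) = Finset.Icc i M := by
        ext j; simp only [Finset.mem_filter, Finset.mem_Icc]; omega
      rw [hR, Finset.mul_sum, ← hfil, Finset.sum_filter]
    have hle : ∑ p ∈ T.filter (fun p => ¬ p.1 ≤ p.2), Δ p.1 ω * Δ p.2 ω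
        ≤ ∑ p ∈ T.filter (fun p => p.1 ≤ p.2), Δ p.1 ω * Δ p.2 ω := by
      have hswap : ∑ p ∈ T.filter (fun p => ¬ p.1 ≤ p.2), Δ p.1 ω * Δ p.2 ω
          = ∑ p ∈ T.filter (fun p => p.2 < p.1), Δ p.1 ω * Δ p.2 ω := by
        exact Finset.sum_congr (Finset.filter_congr fun p _ => by simp [not_le]) fun _ _ => rfl
      rw [hswap]
      have hbij : ∑ p ∈ T.filter (fun p => p.2 < p.1), Δ p.1 ω * Δ p.2 ω
          = ∑ p ∈ T.filter (fun p => p.1 < p.2), Δ p.1 ω * Δ p.2 ω := by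
        refine Finset.sum_nbij' (i := Prod.swap) (j := Prod.swap) ?_ ?_ ?_ ?_ ?_
        · intro p hp
          simp only [hT, Finset.mem_filter, Finset.mem_product, Prod.fst_swap,
            Prod.snd_swap] at hp ⊢
          tauto
        · intro p hp
          simp only [hT, Finset.mem_filter, Finset.mem_product, Prod.fst_swap,
            Prod.snd_swap] at hp ⊢
          tauto
        · intro p _; rfl
        · intro p _; rfl
        · intro p _; simp [mul_comm]
      rw [hbij]
      refine Finset.sum_le_sum_of_subset_of_nonneg ?_
        (fun p _ _ => mul_nonneg (hΔ_nonneg _ ω) (hΔ_nonneg _ ω))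
      exact Finset.monotone_filter_right _ fun p _ hp => le_of_lt hp
    have := Finset.sum_filter_add_sum_filter_not T (fun p => p.1 ≤ p.2)
      (fun p => Δ p.1 ω * Δ p.2 ω)
    rw [hsq, hrhs, ← this]; linarith
  have hsumInt : Integrable (fun ω => ∑ i ∈ Finset.Icc 1 M, Δ i ω * R i ω) P :=
    integrable_finset_sum _ (fun i hi => hΔRInt i hi)
  calc ∫ ω, S ω ^ 2 ∂P
      ≤ ∫ ω, 2 * ∑ i ∈ Finset.Icc 1 M, Δ i ω * R i ω ∂P :=
        integral_mono hSint (hsumInt.const_mul 2) pt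
    _ = 2 * ∑ i ∈ Finset.Icc 1 M, ∫ ω, Δ i ω * R i ω ∂P := by
        rw [integral_const_mul, integral_finset_sum _ (f := fun i ω => Δ i ω * R i ω) (fun i hi => hΔRInt i hi)]
    _ ≤ 2 * ∑ i ∈ Finset.Icc 1 M, C * ∫ ω, Δ i ω ∂P := by
        refine mul_le_mul_of_nonneg_left (Finset.sum_le_sum key) (by norm_num)
    _ = 2 * C * ∫ ω, S ω ∂P := by
        rw [← Finset.mul_sum, ← integral_finset_sum _ (fun i hi => hΔInt i hi)]
        ring
    _ ≤ 2 * C * C := by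
        refine mul_le_mul_of_nonneg_left ?_ (by positivity)
        have h1 : (1 : ℕ) ∈ Finset.Icc 1 M := Finset.mem_Icc.mpr ⟨le_refl 1, hM⟩
        have := hcond 1 h1
        have hint : ∫ ω, S ω ∂P = ∫ ω, (P[S|F 1]) ω ∂P := (integral_condExp (hF_le 1)).symm
        calc ∫ ω, S ω ∂P = ∫ ω, (P[S|F 1]) ω ∂P := hint
          _ ≤ ∫ _ω, C ∂P := by
              refine integral_mono_ae integrable_condExp (integrable_const C) ?_
              have hSeq : S = fun ω' => ∑ j ∈ Finset.Icc 1 M, Δ j ω' := rfl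
              rw [hSeq]; exact this
          _ = C := by simp
    _ = 2 * C ^ 2 := by ring
end

section
/- Let T > 0, γ ∈ (0,1), C > 0, and let g : (0, T] × ℝ → ℝ satisfy: (i) sup_x |g(r, x)| ≤ C·r^{−γ} for all r ∈ (0, T]; (ii) for every r_0 > 0, g is uniformly continuous on [r_0, T] × ℝ. Then the Riemann sums (1/n)·Σ_{k=1}^{⌊nT⌋} g(k/n, x) converge to ∫_0^T g(r, x) dr uniformly in x ∈ ℝ as n → ∞. -/
set_option maxHeartbeats 1000000


open Filter Finset

theorem stmt_13 (T γ C : ℝ) (hT : 0 < T) (hγ0 : 0 < γ) (hγ1 : γ < 1) (hC : 0 < C)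
    (g : ℝ → ℝ → ℝ)
    (hbd : ∀ r ∈ Set.Ioc (0 : ℝ) T, ∀ x : ℝ, |g r x| ≤ C * r ^ (-γ))
    (hcont : ∀ r₀ : ℝ, 0 < r₀ →
      UniformContinuousOn (fun q : ℝ × ℝ => g q.1 q.2) (Set.Icc r₀ T ×ˢ Set.univ)) :
    TendstoUniformly
      (fun (n : ℕ) (x : ℝ) => (1 / (n : ℝ)) * ∑ k ∈ Finset.Icc 1 ⌊(n : ℝ) * T⌋₊, g ((k : ℝ) / n) x)
      (fun x => ∫ r in (0 : ℝ)..T, g r x) atTop := by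
  classical
  have h1γ : (0:ℝ) < 1 - γ := by linarith
  -- continuity of g(·, x) on (0, T]
  have hgcont : ∀ x : ℝ, ContinuousOn (fun r => g r x) (Set.Ioc 0 T) := by
    intro x r hr
    have h2 : ContinuousOn (fun q : ℝ × ℝ => g q.1 q.2) (Set.Icc (r/2) T ×ˢ Set.univ) :=
      (hcont (r/2) (by linarith [hr.1])).continuousOn
    have h3 : ContinuousOn (fun s : ℝ => g s x) (Set.Icc (r/2) T) := by
      have hmap : ContinuousOn (fun s : ℝ => ((s, x) : ℝ × ℝ)) (Set.Icc (r/2) T) :=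
        (continuous_id.prodMk continuous_const).continuousOn
      exact h2.comp hmap (fun s hs => ⟨hs, Set.mem_univ x⟩)
    have hmem : Set.Icc (r/2) T ∈ nhdsWithin r (Set.Ioc 0 T) := by
      apply mem_nhdsWithin.mpr
      refine ⟨Set.Ioi (r/2), isOpen_Ioi, ?_, fun y hy => ⟨le_of_lt hy.1, hy.2.2⟩⟩
      simp only [Set.mem_Ioi]; linarith [hr.1]
    exact (h3.continuousWithinAt ⟨by linarith [hr.1], hr.2⟩).mono_of_mem_nhdsWithin hmem
  -- integrability of the dominating function
  have hρint : ∀ a b : ℝ, IntervalIntegrable (fun r : ℝ => C * r ^ (-γ)) MeasureTheory.volume a b :=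
    fun a b => (intervalIntegral.intervalIntegrable_rpow' (by linarith)).const_mul C
  -- integrability of g(·, x)
  have hgint : ∀ x : ℝ, ∀ a b : ℝ, 0 ≤ a → a ≤ b → b ≤ T →
      IntervalIntegrable (fun r => g r x) MeasureTheory.volume a b := by
    intro x a b ha hab hbT
    rw [intervalIntegrable_iff_integrableOn_Ioc_of_le hab]
    have hsub : Set.Ioc a b ⊆ Set.Ioc 0 T := Set.Ioc_subset_Ioc ha hbT
    have hmeas : MeasureTheory.AEStronglyMeasurable (fun r => g r x)
        (MeasureTheory.volume.restrict (Set.Ioc a b)) :=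
      ((hgcont x).mono hsub).aestronglyMeasurable measurableSet_Ioc
    refine MeasureTheory.Integrable.mono'
      ((intervalIntegrable_iff_integrableOn_Ioc_of_le hab).mp (hρint a b)) hmeas ?_
    exact (MeasureTheory.ae_restrict_iff' measurableSet_Ioc).mpr
      (MeasureTheory.ae_of_all _ fun r hr => by
        rw [Real.norm_eq_abs]; exact hbd r (hsub hr) x)
  -- value of the dominating integral
  have hρval : ∀ a : ℝ, 0 ≤ a →
      (∫ r in (0:ℝ)..a, C * r ^ (-γ)) = C * a ^ (1-γ) / (1-γ) := by
    intro a ha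
    rw [intervalIntegral.integral_const_mul, integral_rpow (Or.inl (by linarith)),
      Real.zero_rpow (by linarith : -γ + 1 ≠ 0)]
    rw [show -γ + 1 = 1 - γ by ring]
    ring
  rw [Metric.tendstoUniformly_iff]
  intro ε hε
  -- choose r₀
  have hcont0 : ContinuousAt (fun s : ℝ => C * s ^ (1-γ) / (1-γ)) 0 := by
    have h := Real.continuousAt_rpow_const 0 (1-γ) (Or.inr (le_of_lt h1γ))
    exact (continuousAt_const.mul h).div_const _
  have hval0 : C * (0:ℝ) ^ (1-γ) / (1-γ) = 0 := by
    rw [Real.zero_rpow (ne_of_gt h1γ)]; ring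
  have h2 : ∀ᶠ s in nhds (0:ℝ), C * s ^ (1-γ) / (1-γ) < ε/16 := by
    have := hcont0.tendsto
    rw [hval0] at this
    exact this (Iio_mem_nhds (by positivity))
  obtain ⟨δ₀, hδ₀, hball⟩ := Metric.eventually_nhds_iff.mp h2
  set r₀ : ℝ := min (T/2) (δ₀/2) with hr₀def
  have hr₀pos : 0 < r₀ := lt_min (by linarith) (by linarith)
  have hr₀T : r₀ < T := lt_of_le_of_lt (min_le_left _ _) (by linarith)
  have hr₀ε : C * r₀ ^ (1-γ) / (1-γ) < ε/16 := by
    apply hball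
    rw [Real.dist_eq, sub_zero, abs_of_pos hr₀pos]
    exact lt_of_le_of_lt (min_le_right _ _) (by linarith)
  -- choose δ from uniform continuity
  set ε' : ℝ := ε / (4 * (T+1)) with hε'def
  have hε'pos : 0 < ε' := by positivity
  obtain ⟨δ, hδpos, hδ⟩ := (Metric.uniformContinuousOn_iff.mp (hcont r₀ hr₀pos)) ε' hε'pos
  -- eventual conditions on n
  have he1 : ∀ᶠ n : ℕ in atTop, 1/(n:ℝ) < δ :=
    tendsto_one_div_atTop_nhds_zero_nat (Iio_mem_nhds hδpos)
  have he2 : ∀ᶠ n : ℕ in atTop, 2/(T - r₀) ≤ (n:ℝ) :=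
    tendsto_natCast_atTop_atTop.eventually_ge_atTop _
  have he3 : ∀ᶠ n : ℕ in atTop, C * r₀ ^ (-γ) * (1/(n:ℝ)) < ε/4 := by
    have ht : Tendsto (fun n : ℕ => C * r₀ ^ (-γ) * (1/(n:ℝ))) atTop (nhds 0) := by
      have := tendsto_one_div_atTop_nhds_zero_nat.const_mul (C * r₀ ^ (-γ))
      simpa using this
    exact ht (Iio_mem_nhds (by positivity))
  have he4 : ∀ᶠ n : ℕ in atTop, 1/r₀ ≤ (n:ℝ) :=
    tendsto_natCast_atTop_atTop.eventually_ge_atTop _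
  filter_upwards [he1, he2, he3, he4, eventually_ge_atTop 1] with n h1 h2' h3 h4 h5
  intro x
  have hn0 : (0:ℝ) < n := by exact_mod_cast h5
  have hnne : (n:ℝ) ≠ 0 := ne_of_gt hn0
  set N : ℕ := ⌊(n:ℝ) * T⌋₊ with hNdef
  set K : ℕ := ⌈(n:ℝ) * r₀⌉₊ with hKdef
  have hNle : (N:ℝ) ≤ n * T := Nat.floor_le (by positivity)
  have hNgt : (n:ℝ) * T < N + 1 := Nat.lt_floor_add_one _
  have hKge : (n:ℝ) * r₀ ≤ K := Nat.le_ceil _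
  have hKlt : (K:ℝ) < n * r₀ + 1 := Nat.ceil_lt_add_one (by positivity)
  have hnTr : 2 ≤ (n:ℝ) * (T - r₀) := by
    rw [div_le_iff₀ (by linarith)] at h2'
    linarith
  have hKN : K ≤ N := by
    have h : (K:ℝ) < (N:ℝ) + 1 := by nlinarith
    exact_mod_cast Nat.lt_succ_iff.mp (by exact_mod_cast h)
  have hNnT : (N:ℝ)/n ≤ T := by
    rw [div_le_iff₀ hn0]; linarith
  have hKn2r : (K:ℝ)/n ≤ 2 * r₀ := by
    rw [div_le_iff₀ hn0]
    have h6 : 1 ≤ (n:ℝ) * r₀ := by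
      rw [div_le_iff₀ hr₀pos] at h4; linarith
    linarith
  have hr₀Kn : r₀ ≤ (K:ℝ)/n := by
    rw [le_div_iff₀ hn0]; linarith
  have hr₀Nn : r₀ ≤ (N:ℝ)/n := by
    rw [le_div_iff₀ hn0]; nlinarith
  have hTNn : T - (N:ℝ)/n ≤ 1/n := by
    rw [sub_le_iff_le_add, ← add_div, le_div_iff₀ hn0]
    linarith
  -- interval endpoints
  set a : ℕ → ℝ := fun i => (i:ℝ)/n with hadef
  have ha0 : a 0 = 0 := by simp [hadef]
  have hamono : ∀ {i j : ℕ}, i ≤ j → a i ≤ a j := by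
    intro i j hij
    simp only [hadef]
    exact (div_le_div_iff_of_pos_right hn0).mpr (by exact_mod_cast hij)
  have hann : ∀ i : ℕ, 0 ≤ a i := by
    intro i; simp only [hadef]; positivity
  have halen : ∀ i : ℕ, a (i+1) - a i = 1/(n:ℝ) := by
    intro i; simp only [hadef]; push_cast; field_simp; ring
  have haT : ∀ i : ℕ, i ≤ N → a i ≤ T := fun i hi => le_trans (hamono hi) (by
    simp only [hadef]; exact hNnT)
  have hapos : ∀ i : ℕ, 0 < i → 0 < a i := by
    intro i hi; simp only [hadef]
    apply div_pos _ hn0; exact_mod_cast hi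
  -- the summand differences
  set d : ℕ → ℝ := fun i => (∫ r in a i..a (i+1), g r x) - (1/(n:ℝ)) * g (a (i+1)) x with hddef
  -- rewrite the Riemann sum
  have hSsum : (1/(n:ℝ)) * ∑ k ∈ Finset.Icc 1 N, g ((k:ℝ)/n) x
      = ∑ i ∈ Finset.range N, (1/(n:ℝ)) * g (a (i+1)) x := by
    rw [Finset.mul_sum, ← Finset.Ico_add_one_right_eq_Icc, Finset.sum_Ico_eq_sum_range]
    refine Finset.sum_congr rfl fun i _ => ?_
    have hh : (((1+i : ℕ)):ℝ)/(n:ℝ) = a (i+1) := by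
      simp only [hadef]; push_cast; ring
    rw [hh]
  -- rewrite the integral over [0, a N]
  have hIsum : ∑ i ∈ Finset.range N, ∫ r in a i..a (i+1), g r x
      = ∫ r in (0:ℝ)..a N, g r x := by
    rw [← ha0]
    exact intervalIntegral.sum_integral_adjacent_intervals fun i hi =>
      hgint x _ _ (hann i) (hamono (Nat.le_succ i)) (haT (i+1) hi)
  have hsplitI : (∫ r in (0:ℝ)..T, g r x)
      = (∫ r in (0:ℝ)..a N, g r x) + ∫ r in a N..T, g r x :=
    (intervalIntegral.integral_add_adjacent_intervals
      (hgint x 0 (a N) le_rfl (hann N) (haT N le_rfl))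
      (hgint x (a N) T (hann N) (haT N le_rfl) le_rfl)).symm
  have key : (∫ r in (0:ℝ)..T, g r x) - (1/(n:ℝ)) * ∑ k ∈ Finset.Icc 1 N, g ((k:ℝ)/n) x
      = ((∑ i ∈ Finset.Ico 0 K, d i) + ∑ i ∈ Finset.Ico K N, d i)
        + ∫ r in a N..T, g r x := by
    rw [Finset.sum_Ico_consecutive d (Nat.zero_le K) hKN, ← Finset.range_eq_Ico,
      hSsum, hsplitI, ← hIsum, hddef]
    rw [Finset.sum_sub_distrib]
    ring
  -- bound B1 : small indices
  have hB1' : ∀ i ∈ Finset.Ico 0 K, |d i| ≤ 2 * ∫ r in a i..a (i+1), C * r ^ (-γ) := by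
    intro i hi
    have hiK : i < K := (Finset.mem_Ico.mp hi).2
    have hi1N : i + 1 ≤ N := le_trans hiK hKN
    have hiab : a i ≤ a (i+1) := hamono (Nat.le_succ i)
    have hibT : a (i+1) ≤ T := haT _ hi1N
    have hbpos : 0 < a (i+1) := hapos _ (Nat.succ_pos i)
    have hgb : |g (a (i+1)) x| ≤ C * (a (i+1)) ^ (-γ) := hbd _ ⟨hbpos, hibT⟩ x
    have hρnn : 0 ≤ ∫ r in a i..a (i+1), C * r ^ (-γ) := by
      apply intervalIntegral.integral_nonneg hiab
      intro r hr
      exact mul_nonneg hC.le (Real.rpow_nonneg (le_trans (hann i) hr.1) _)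
    have hint1 : |∫ r in a i..a (i+1), g r x| ≤ ∫ r in a i..a (i+1), C * r ^ (-γ) := by
      have h := intervalIntegral.norm_integral_le_of_norm_le (μ := MeasureTheory.volume)
        (f := fun r => g r x) (g := fun r => C * r ^ (-γ)) (a := a i) (b := a (i+1)) hiab ?_ (hρint _ _)
      · rwa [Real.norm_eq_abs] at h
      · refine MeasureTheory.ae_of_all _ fun r hr => ?_
        rw [Real.norm_eq_abs]
        exact hbd r ⟨lt_of_le_of_lt (hann i) hr.1, le_trans hr.2 hibT⟩ x
    have hconst : (1/(n:ℝ)) * (C * (a (i+1)) ^ (-γ)) ≤ ∫ r in a i..a (i+1), C * r ^ (-γ) := by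
      have heq : (∫ _r in a i..a (i+1), C * (a (i+1)) ^ (-γ))
          = (1/(n:ℝ)) * (C * (a (i+1)) ^ (-γ)) := by
        rw [intervalIntegral.integral_const, smul_eq_mul, halen i]
      rw [← heq]
      apply intervalIntegral.integral_mono_ae_restrict hiab
        (intervalIntegrable_const) (hρint _ _)
      rw [← MeasureTheory.Measure.restrict_congr_set MeasureTheory.Ioc_ae_eq_Icc]
      refine (MeasureTheory.ae_restrict_iff' measurableSet_Ioc).mpr
        (MeasureTheory.ae_of_all _ fun r hr => ?_)
      exact mul_le_mul_of_nonneg_left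
        (Real.rpow_le_rpow_of_nonpos (lt_of_le_of_lt (hann i) hr.1) hr.2 (by linarith)) hC.le
    calc |d i| ≤ |∫ r in a i..a (i+1), g r x| + |(1/(n:ℝ)) * g (a (i+1)) x| := abs_sub _ _
      _ ≤ (∫ r in a i..a (i+1), C * r ^ (-γ)) + (1/(n:ℝ)) * (C * (a (i+1)) ^ (-γ)) := by
          refine add_le_add hint1 ?_
          rw [abs_mul, abs_of_pos (by positivity : (0:ℝ) < 1/(n:ℝ))]
          exact mul_le_mul_of_nonneg_left hgb (by positivity)
      _ ≤ 2 * ∫ r in a i..a (i+1), C * r ^ (-γ) := by linarith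
  have hB1 : |∑ i ∈ Finset.Ico 0 K, d i| ≤ ε/4 := by
    have hsum1 : ∑ i ∈ Finset.Ico 0 K, ∫ r in a i..a (i+1), C * r ^ (-γ)
        = ∫ r in (0:ℝ)..a K, C * r ^ (-γ) := by
      rw [← Finset.range_eq_Ico, ← ha0]
      exact intervalIntegral.sum_integral_adjacent_intervals fun i _ => hρint _ _
    have hchain : |∑ i ∈ Finset.Ico 0 K, d i| ≤ 2 * (C * (a K) ^ (1-γ) / (1-γ)) := by
      calc |∑ i ∈ Finset.Ico 0 K, d i| ≤ ∑ i ∈ Finset.Ico 0 K, |d i| :=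
            Finset.abs_sum_le_sum_abs _ _
        _ ≤ ∑ i ∈ Finset.Ico 0 K, 2 * ∫ r in a i..a (i+1), C * r ^ (-γ) :=
            Finset.sum_le_sum hB1'
        _ = 2 * ∫ r in (0:ℝ)..a K, C * r ^ (-γ) := by rw [← Finset.mul_sum, hsum1]
        _ = 2 * (C * (a K) ^ (1-γ) / (1-γ)) := by rw [hρval _ (hann K)]
    have hKbound : (a K) ^ (1-γ) ≤ 2 * r₀ ^ (1-γ) := by
      have h7 : (a K) ^ (1-γ) ≤ (2*r₀) ^ (1-γ) :=
        Real.rpow_le_rpow (hann K) (by simpa [hadef] using hKn2r) (le_of_lt h1γ)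
      have h8 : ((2:ℝ)*r₀) ^ (1-γ) = 2 ^ (1-γ) * r₀ ^ (1-γ) :=
        Real.mul_rpow (by norm_num) hr₀pos.le
      have h9 : (2:ℝ) ^ (1-γ) ≤ 2 := by
        have := Real.rpow_le_rpow_of_exponent_le (by norm_num : (1:ℝ) ≤ 2)
          (by linarith : 1 - γ ≤ 1)
        simpa using this
      have h10 : 0 ≤ r₀ ^ (1-γ) := Real.rpow_nonneg hr₀pos.le _
      have h12 : (2:ℝ) ^ (1-γ) * r₀ ^ (1-γ) ≤ 2 * r₀ ^ (1-γ) :=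
        mul_le_mul_of_nonneg_right h9 h10
      rw [h8] at h7
      linarith
    have h11 : 2 * (C * (a K) ^ (1-γ) / (1-γ)) ≤ 4 * (C * r₀ ^ (1-γ) / (1-γ)) := by
      calc 2 * (C * (a K) ^ (1-γ) / (1-γ)) ≤ 2 * (C * (2 * r₀ ^ (1-γ)) / (1-γ)) := by
            gcongr
        _ = 4 * (C * r₀ ^ (1-γ) / (1-γ)) := by ring
    linarith
  -- bound B2 : middle indices
  have hB2' : ∀ i ∈ Finset.Ico K N, |d i| ≤ ε' * (1/(n:ℝ)) := by
    intro i hi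
    obtain ⟨hiK, hiN⟩ := Finset.mem_Ico.mp hi
    have hiab : a i ≤ a (i+1) := hamono (Nat.le_succ i)
    have hibT : a (i+1) ≤ T := haT _ hiN
    have hr₀ai : r₀ ≤ a i := le_trans hr₀Kn (by simpa [hadef] using hamono hiK)
    have hmemb : ((a (i+1), x) : ℝ × ℝ) ∈ Set.Icc r₀ T ×ˢ (Set.univ : Set ℝ) :=
      ⟨⟨le_trans hr₀ai hiab, hibT⟩, Set.mem_univ x⟩
    have hrew : d i = ∫ r in a i..a (i+1), (g r x - g (a (i+1)) x) := by
      rw [intervalIntegral.integral_sub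
        (hgint x _ _ (hann i) hiab hibT) (intervalIntegrable_const),
        intervalIntegral.integral_const, smul_eq_mul, halen i, hddef]
    rw [hrew]
    have hb := intervalIntegral.norm_integral_le_of_norm_le_const
      (C := ε') (f := fun r => g r x - g (a (i+1)) x) (a := a i) (b := a (i+1)) ?_
    · rw [Real.norm_eq_abs] at hb
      refine le_trans hb (le_of_eq ?_)
      rw [show |a (i+1) - a i| = 1/(n:ℝ) by rw [halen i]; exact abs_of_pos (by positivity)]
    · intro r hr
      rw [Set.uIoc_of_le hiab] at hr
      have hrmem : ((r, x) : ℝ × ℝ) ∈ Set.Icc r₀ T ×ˢ (Set.univ : Set ℝ) :=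
        ⟨⟨le_trans hr₀ai hr.1.le, le_trans hr.2 hibT⟩, Set.mem_univ x⟩
      have hdist : dist ((r, x) : ℝ × ℝ) ((a (i+1), x) : ℝ × ℝ) < δ := by
        rw [Prod.dist_eq]
        simp only [dist_self]
        rw [sup_eq_left.mpr dist_nonneg, Real.dist_eq, abs_sub_comm,
          abs_of_nonneg (by linarith [hr.2] : (0:ℝ) ≤ a (i+1) - r)]
        have := halen i
        have := hr.1
        linarith
      have := hδ _ hrmem _ hmemb hdist
      rw [Real.dist_eq] at this
      rw [Real.norm_eq_abs]
      exact le_of_lt this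
  have hB2 : |∑ i ∈ Finset.Ico K N, d i| ≤ ε/4 := by
    have hcard : (((Finset.Ico K N).card : ℕ) : ℝ) ≤ (N:ℝ) := by
      rw [Nat.card_Ico]; exact_mod_cast Nat.sub_le N K
    have hstep : ∑ i ∈ Finset.Ico K N, |d i| ≤ ((Finset.Ico K N).card : ℝ) * (ε' * (1/(n:ℝ))) := by
      have := Finset.sum_le_card_nsmul (Finset.Ico K N) (fun i => |d i|) (ε' * (1/(n:ℝ))) hB2'
      simpa [nsmul_eq_mul] using this
    have hchain : ((Finset.Ico K N).card : ℝ) * (ε' * (1/(n:ℝ))) ≤ T * ε' := by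
      calc ((Finset.Ico K N).card : ℝ) * (ε' * (1/(n:ℝ)))
          ≤ (N:ℝ) * (ε' * (1/(n:ℝ))) :=
            mul_le_mul_of_nonneg_right hcard (by positivity)
        _ = ((N:ℝ)/n) * ε' := by ring
        _ ≤ T * ε' := mul_le_mul_of_nonneg_right hNnT hε'pos.le
    have hfin : T * ε' ≤ ε/4 := by
      have h14 : T * ε' ≤ (T+1) * ε' := mul_le_mul_of_nonneg_right (by linarith) hε'pos.le
      have h15 : (T+1) * ε' = ε/4 := by
        rw [hε'def]; field_simp
      linarith
    calc |∑ i ∈ Finset.Ico K N, d i| ≤ ∑ i ∈ Finset.Ico K N, |d i| :=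
          Finset.abs_sum_le_sum_abs _ _
      _ ≤ ε/4 := by linarith
  -- bound B3 : tail
  have hB3 : |∫ r in a N..T, g r x| ≤ ε/4 := by
    have haNT : a N ≤ T := haT N le_rfl
    have hr₀aN : r₀ ≤ a N := by simp only [hadef]; exact hr₀Nn
    have hb := intervalIntegral.norm_integral_le_of_norm_le_const
      (C := C * r₀ ^ (-γ)) (f := fun r => g r x) (a := a N) (b := T) ?_
    · rw [Real.norm_eq_abs] at hb
      have habs : |T - a N| ≤ 1/(n:ℝ) := by
        rw [abs_of_nonneg (by linarith)]
        simp only [hadef]; exact hTNn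
      calc |∫ r in a N..T, g r x| ≤ C * r₀ ^ (-γ) * |T - a N| := hb
        _ ≤ C * r₀ ^ (-γ) * (1/(n:ℝ)) :=
            mul_le_mul_of_nonneg_left habs (by positivity)
        _ ≤ ε/4 := le_of_lt h3
    · intro r hr
      rw [Set.uIoc_of_le haNT] at hr
      have hrr : r₀ < r := lt_of_le_of_lt hr₀aN hr.1
      rw [Real.norm_eq_abs]
      calc |g r x| ≤ C * r ^ (-γ) := hbd r ⟨lt_trans hr₀pos hrr, hr.2⟩ x
        _ ≤ C * r₀ ^ (-γ) :=
            mul_le_mul_of_nonneg_left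
              (Real.rpow_le_rpow_of_nonpos hr₀pos hrr.le (by linarith)) hC.le
  rw [Real.dist_eq, key]
  calc |(∑ i ∈ Finset.Ico 0 K, d i + ∑ i ∈ Finset.Ico K N, d i) + ∫ r in a N..T, g r x|
      ≤ |∑ i ∈ Finset.Ico 0 K, d i + ∑ i ∈ Finset.Ico K N, d i| + |∫ r in a N..T, g r x| :=
        abs_add_le _ _
    _ ≤ |∑ i ∈ Finset.Ico 0 K, d i| + |∑ i ∈ Finset.Ico K N, d i| + |∫ r in a N..T, g r x| := by
        linarith [abs_add_le (∑ i ∈ Finset.Ico 0 K, d i) (∑ i ∈ Finset.Ico K N, d i)]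
    _ < ε := by linarith
end
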